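/- arXiv:physics/0412157 — 4 statements merged into one kernel-verified Lean document; each statement's English description precedes it below -/
import Mathlib

section
/- In the spin-orbit setting, suppose there exists a uniform invariant frame field 𝒱 with constant precession rate ν = C_𝒱 ∈ [0,1). Then for every φ₀ ∈ ℝ^d, the map U(θ) := 𝒱(θ, φ₀ + ωθ) satisfies Φ(θ;φ₀) = U(θ) exp(𝒥νθ) U(0)ᵀ for all θ ∈ ℝ, and U is entrywise quasiperiodic with tune vector (1,ω) ∈ ℝ^{d+1}; that is, U is a proper uniform precession frame at φ₀ with uniform precession rate ν, the same ν for every φ₀. -/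
open MeasureTheory Filter
noncomputable section

/-- The matrix 𝒥: (2,1)-entry 1, (1,2)-entry −1, all other entries 0. -/
def Jmat : Matrix (Fin 3) (Fin 3) ℝ := Matrix.of ![![0, -1, 0], ![1, 0, 0], ![0, 0, 0]]

/-- The special orthogonal group SO(3): R.transposeR = I and det R = 1. -/
def SO3 : Set (Matrix (Fin 3) (Fin 3) ℝ) := {R | R.transpose * R = 1 ∧ R.det = 1}

/-- 2π-periodicity in each of the k arguments. -/
def Periodic2Pi {k : ℕ} {E : Type*} (F : (Fin k → ℝ) → E) : Prop :=
  ∀ (z : Fin k → ℝ) (i : Fin k), F (Function.update z i (z i + 2 * Real.pi)) = F z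

/-- `f : ℝ → E` is quasiperiodic with tune vector `ν ∈ ℝ^k` if `f θ = F (νθ)` for a
continuous `F` that is 2π-periodic in each argument. -/
def IsQuasiperiodic {E : Type*} [TopologicalSpace E] {k : ℕ} (ν : Fin k → ℝ) (f : ℝ → E) : Prop :=
  ∃ F : (Fin k → ℝ) → E, Continuous F ∧ Periodic2Pi F ∧ ∀ θ : ℝ, f θ = F fun i => ν i * θ

/-- integer dot product `m · v` -/
def zdot {k : ℕ} (m : Fin k → ℤ) (v : Fin k → ℝ) : ℝ := ∑ i, (m i : ℝ) * v i

/-- `ν` is nonresonant if `m · ν = 0` only for `m = 0`. -/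
def Nonresonant {k : ℕ} (ν : Fin k → ℝ) : Prop :=
  ∀ m : Fin k → ℤ, zdot m ν = 0 → m = 0

/-- Fourier coefficient `F_m = (2π)^{-k} ∫_{[0,2π]^k} F(z) e^{-i m·z} dz`. -/
def mFourierCoeff {k : ℕ} (F : (Fin k → ℝ) → ℂ) (m : Fin k → ℤ) : ℂ :=
  ((2 * Real.pi) ^ k : ℝ)⁻¹ •
    ∫ z in Set.Icc (0 : Fin k → ℝ) (fun _ => 2 * Real.pi),
      F z * Complex.exp (-Complex.I * ∑ i, (m i : ℝ) * z i)

/-- The phase space `ℝ × ℝ^d` of pairs `(θ, φ)`. -/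
abbrev Pt (d : ℕ) := ℝ × (Fin d → ℝ)

/-- The vector `(1, ω) ∈ ℝ^{d+1}`. -/
def oneOmega {d : ℕ} (ω : Fin d → ℝ) : Fin (d + 1) → ℝ := Fin.cons 1 ω

/-- max norm `‖m‖ = max_i |m_i|` of an integer vector. -/
def intNorm {k : ℕ} (m : Fin k → ℤ) : ℕ := Finset.univ.sup fun i => (m i).natAbs

/-- The Diophantine set `Ω(τ) = ⋃_{γ ∈ (0,1]} Ω(τ,γ)` where
`Ω(τ,γ) = {ω : |m·(1,ω)| ≥ γ‖m‖^{-τ} for all nonzero m ∈ ℤ^{d+1}}`. -/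
def DiophSet (d : ℕ) (τ : ℝ) : Set (Fin d → ℝ) :=
  ⋃ γ ∈ Set.Ioc (0 : ℝ) 1,
    {ω | ∀ m : Fin (d + 1) → ℤ, m ≠ 0 → γ * (intNorm m : ℝ) ^ (-τ) ≤ |zdot m (oneOmega ω)|}

/-- The derivation 𝒟 applied to the entries of a matrix-valued function:
`(𝒟V)(p) = ∂_θ V + ω·∇_φ V`, i.e. the directional derivative along `(1, ω)`. -/
def Dmat {d : ℕ} (ω : Fin d → ℝ) (V : Pt d → Matrix (Fin 3) (Fin 3) ℝ) (p : Pt d) :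
    Matrix (Fin 3) (Fin 3) ℝ :=
  Matrix.of fun i j => fderiv ℝ (fun q => V q i j) p (1, ω)

/-- Periodicity: 2π-periodic in θ and in each component of φ. -/
def PeriodicPt {d : ℕ} {E : Type*} (f : Pt d → E) : Prop :=
  (∀ p : Pt d, f (p.1 + 2 * Real.pi, p.2) = f p) ∧
  (∀ (p : Pt d) (i : Fin d), f (p.1, Function.update p.2 i (p.2 i + 2 * Real.pi)) = f p)

/-- A matrix-valued map on `ℝ × ℝ^d` is of class `C^n` (entrywise). -/
def SmoothMat {d : ℕ} (n : ℕ∞) (V : Pt d → Matrix (Fin 3) (Fin 3) ℝ) : Prop :=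
  ∀ i j, ContDiff ℝ n fun p => V p i j

/-- `Φ` is the principal solution matrix at `φ₀`:
`∂_θ Φ(θ) = 𝒜(θ, ωθ + φ₀) Φ(θ)`, `Φ(0) = I`. -/
def IsPrincipalSolution {d : ℕ} (ω : Fin d → ℝ) (𝒜 : Pt d → Matrix (Fin 3) (Fin 3) ℝ)
    (φ₀ : Fin d → ℝ) (Φ : ℝ → Matrix (Fin 3) (Fin 3) ℝ) : Prop :=
  Φ 0 = 1 ∧ ∀ (θ : ℝ) (i j : Fin 3),
    HasDerivAt (fun t => Φ t i j) ((𝒜 (θ, fun l => ω l * θ + φ₀ l) * Φ θ) i j) θ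

/-- A uniform invariant frame field: C¹, 2π-periodic, SO(3)-valued, satisfying
`𝒟𝒱 = 𝒜𝒱 − ν𝒱𝒥` for a constant `ν ∈ [0,1)`. -/
def IsUniformIFF {d : ℕ} (ω : Fin d → ℝ) (𝒜 V : Pt d → Matrix (Fin 3) (Fin 3) ℝ) (ν : ℝ) :
    Prop :=
  SmoothMat 1 V ∧ PeriodicPt V ∧ (∀ p, V p ∈ SO3) ∧ ν ∈ Set.Ico (0 : ℝ) 1 ∧
  ∀ p, Dmat ω V p = 𝒜 p * V p - ν • (V p * Jmat)

/-- An invariant frame field: C¹, 2π-periodic, SO(3)-valued, whose third column 𝔳³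
satisfies `𝒟𝔳³ = 𝒜𝔳³`. -/
def IsIFF {d : ℕ} (ω : Fin d → ℝ) (𝒜 V : Pt d → Matrix (Fin 3) (Fin 3) ℝ) : Prop :=
  SmoothMat 1 V ∧ PeriodicPt V ∧ (∀ p, V p ∈ SO3) ∧
  ∀ (p : Pt d) (i : Fin 3),
    fderiv ℝ (fun q => V q i 2) p (1, ω) = ((𝒜 p).mulVec fun j => V p j 2) i

/-- An invariant spin field: C¹, 2π-periodic, unit length, satisfying `𝒟n = 𝒜n`. -/
def IsISF {d : ℕ} (ω : Fin d → ℝ) (𝒜 : Pt d → Matrix (Fin 3) (Fin 3) ℝ)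
    (n : Pt d → Fin 3 → ℝ) : Prop :=
  (∀ i, ContDiff ℝ 1 fun p => n p i) ∧ PeriodicPt n ∧ (∀ p, ∑ i, n p i ^ 2 = 1) ∧
  ∀ (p : Pt d) (i : Fin 3), fderiv ℝ (fun q => n q i) p (1, ω) = ((𝒜 p).mulVec (n p)) i

/-- cross product on ℝ³ -/
def cross3 (u v : Fin 3 → ℝ) : Fin 3 → ℝ :=
  ![u 1 * v 2 - u 2 * v 1, u 2 * v 0 - u 0 * v 2, u 0 * v 1 - u 1 * v 0]

/-- Euclidean norm on ℝ³ -/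
def nrm3 (v : Fin 3 → ℝ) : ℝ := Real.sqrt (∑ i, v i ^ 2)

/-- normalization of a vector in ℝ³ -/
def unitize (v : Fin 3 → ℝ) : Fin 3 → ℝ := fun i => v i / nrm3 v

/-- the matrix with columns a, b, c -/
def colMat (a b c : Fin 3 → ℝ) : Matrix (Fin 3) (Fin 3) ℝ := (Matrix.of ![a, b, c]).transpose


section Helpers

lemma entryJt : Jmat.transpose = -Jmat := by
  ext i j
  fin_cases i <;> fin_cases j <;> simp [Jmat, Matrix.vecHead, Matrix.vecTail]

/-- entry linear map -/
def entryLM (i j : Fin 3) : Matrix (Fin 3) (Fin 3) ℝ →ₗ[ℝ] ℝ where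
  toFun M := M i j
  map_add' _ _ := rfl
  map_smul' _ _ := rfl

lemma hasDerivAt_matmul {A B : ℝ → Matrix (Fin 3) (Fin 3) ℝ}
    {A' B' : Matrix (Fin 3) (Fin 3) ℝ} {θ : ℝ}
    (hA : ∀ i j, HasDerivAt (fun t => A t i j) (A' i j) θ)
    (hB : ∀ i j, HasDerivAt (fun t => B t i j) (B' i j) θ) (i j : Fin 3) :
    HasDerivAt (fun t => (A t * B t) i j) ((A' * B θ + A θ * B') i j) θ := by
  have h : HasDerivAt (fun t => ∑ k, A t i k * B t k j)
      (∑ k, (A' i k * B θ k j + A θ i k * B' k j)) θ :=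
    HasDerivAt.fun_sum fun k _ => (hA i k).mul (hB k j)
  simpa [Matrix.mul_apply, Matrix.add_apply, Finset.sum_add_distrib] using h

lemma hasDerivAt_exp_entry (c : ℝ) (M : Matrix (Fin 3) (Fin 3) ℝ) (θ : ℝ) (i j : Fin 3) :
    HasDerivAt (fun t : ℝ => NormedSpace.exp ((c * t) • M) i j)
      ((c • (NormedSpace.exp ((c * θ) • M) * M)) i j) θ := by
  letI : SeminormedRing (Matrix (Fin 3) (Fin 3) ℝ) := Matrix.linftyOpSemiNormedRing
  letI : NormedRing (Matrix (Fin 3) (Fin 3) ℝ) := Matrix.linftyOpNormedRing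
  letI : NormedAlgebra ℝ (Matrix (Fin 3) (Fin 3) ℝ) := Matrix.linftyOpNormedAlgebra
  have h1 : HasDerivAt (fun u : ℝ => NormedSpace.exp (u • M))
      (NormedSpace.exp ((c * θ) • M) * M) (c * θ) :=
    hasDerivAt_exp_smul_const M (c * θ)
  have h2 : HasDerivAt (fun t : ℝ => c * t) c θ := by
    simpa using (hasDerivAt_id θ).const_mul c
  have h3 : HasDerivAt (fun t : ℝ => NormedSpace.exp ((c * t) • M))
      (c • (NormedSpace.exp ((c * θ) • M) * M)) θ := h1.scomp θ h2
  exact ((entryLM i j).toContinuousLinearMap.hasFDerivAt.comp_hasDerivAt θ h3)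

lemma expEm (a : ℝ) :
    NormedSpace.exp (a • Jmat) * NormedSpace.exp (a • (-Jmat)) = 1 := by
  have hc : Commute (a • Jmat) (a • (-Jmat)) :=
    (((Commute.refl Jmat).neg_right).smul_left a).smul_right a
  have h := (Matrix.exp_add_of_commute (a • Jmat) (a • (-Jmat)) hc).symm
  simpa [smul_neg, NormedSpace.exp_zero] using h

end Helpers

/-- Theorem 6.3a. -/
theorem uniform_IFF_gives_proper_UPF {d : ℕ} (hd : 1 ≤ d) (ω : Fin d → ℝ)
    (𝒜 : Pt d → Matrix (Fin 3) (Fin 3) ℝ)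
    (h𝒜s : SmoothMat 1 𝒜) (h𝒜skew : ∀ p, (𝒜 p).transpose = -(𝒜 p))
    (h𝒜per : PeriodicPt 𝒜)
    (𝒱 : Pt d → Matrix (Fin 3) (Fin 3) ℝ) (ν : ℝ)
    (h𝒱 : IsUniformIFF ω 𝒜 𝒱 ν)
    (φ₀ : Fin d → ℝ) (Φ : ℝ → Matrix (Fin 3) (Fin 3) ℝ)
    (hΦ : IsPrincipalSolution ω 𝒜 φ₀ Φ) :
    (∀ θ : ℝ, Φ θ = 𝒱 (θ, fun l => φ₀ l + ω l * θ) * NormedSpace.exp ((ν * θ) • Jmat) *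
      (𝒱 (0, fun l => φ₀ l + ω l * 0)).transpose) ∧
    ∀ i j, IsQuasiperiodic (oneOmega ω) fun θ => 𝒱 (θ, fun l => φ₀ l + ω l * θ) i j := by
  classical
  obtain ⟨hVs, hVper, hVSO3, hν, hVode⟩ := h𝒱
  set p : ℝ → Pt d := fun θ => (θ, fun l => φ₀ l + ω l * θ) with hp
  set U : ℝ → Matrix (Fin 3) (Fin 3) ℝ := fun θ => 𝒱 (p θ) with hU
  set E : ℝ → Matrix (Fin 3) (Fin 3) ℝ := fun θ => NormedSpace.exp ((ν * θ) • Jmat) with hE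
  set Em : ℝ → Matrix (Fin 3) (Fin 3) ℝ :=
    fun θ => NormedSpace.exp ((ν * θ) • (-Jmat)) with hEm
  -- derivative of U entrywise
  have hγ : ∀ θ : ℝ, HasDerivAt p (1, ω) θ := by
    intro θ
    exact (hasDerivAt_id θ).prodMk (hasDerivAt_pi.2 fun l => by
      simpa using ((hasDerivAt_id θ).const_mul (ω l)).const_add (φ₀ l))
  have hUderiv : ∀ (θ : ℝ) (i j : Fin 3), HasDerivAt (fun t => U t i j)
      ((𝒜 (p θ) * U θ - ν • (U θ * Jmat)) i j) θ := by
    intro θ i j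
    have hVd : HasFDerivAt (fun q => 𝒱 q i j)
        (fderiv ℝ (fun q => 𝒱 q i j) (p θ)) (p θ) :=
      (((hVs i j).differentiable (by simp)) (p θ)).hasFDerivAt
    have h := hVd.comp_hasDerivAt θ (hγ θ)
    have hD : fderiv ℝ (fun q => 𝒱 q i j) (p θ) (1, ω)
        = (𝒜 (p θ) * 𝒱 (p θ) - ν • (𝒱 (p θ) * Jmat)) i j := by
      have := congrArg (fun M => M i j) (hVode (p θ))
      simpa [Dmat] using this
    rw [hD] at h
    exact h
  -- derivative of Φ entrywise, rewritten at p θ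
  have hΦderiv : ∀ (θ : ℝ) (i j : Fin 3), HasDerivAt (fun t => Φ t i j)
      ((𝒜 (p θ) * Φ θ) i j) θ := by
    intro θ i j
    have h := hΦ.2 θ i j
    have harg : (fun l => ω l * θ + φ₀ l) = fun l => φ₀ l + ω l * θ :=
      funext fun l => add_comm _ _
    rw [harg] at h
    exact h
  -- the conjugated solution is constant
  set H : ℝ → Matrix (Fin 3) (Fin 3) ℝ := fun θ => Em θ * (U θ).transpose * Φ θ with hH
  have hHderiv : ∀ (θ : ℝ) (i j : Fin 3), HasDerivAt (fun t => H t i j) 0 θ := by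
    intro θ i j
    have hEmd : ∀ i j : Fin 3, HasDerivAt (fun t => Em t i j)
        ((ν • (Em θ * (-Jmat))) i j) θ := fun i j => hasDerivAt_exp_entry ν (-Jmat) θ i j
    have hUtd : ∀ i j : Fin 3, HasDerivAt (fun t => (U t).transpose i j)
        ((𝒜 (p θ) * U θ - ν • (U θ * Jmat)).transpose i j) θ := by
      intro i j
      simpa [Matrix.transpose_apply] using hUderiv θ j i
    have h1 := hasDerivAt_matmul hEmd hUtd
    have h2 := hasDerivAt_matmul h1 (hΦderiv θ)
    have hzero : (ν • (Em θ * -Jmat) * (U θ).transpose + Em θ * (𝒜 (p θ) * U θ - ν • (U θ * Jmat)).transpose)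
        * Φ θ + Em θ * (U θ).transpose * (𝒜 (p θ) * Φ θ) = 0 := by
      have hAt : (𝒜 (p θ)).transpose = -(𝒜 (p θ)) := h𝒜skew (p θ)
      simp only [Matrix.transpose_sub, Matrix.transpose_mul, Matrix.transpose_smul, hAt,
        entryJt]
      simp only [Matrix.mul_neg, Matrix.neg_mul, Matrix.mul_smul, Matrix.smul_mul,
        Matrix.mul_sub, Matrix.sub_mul, Matrix.add_mul, Matrix.mul_add, ← Matrix.mul_assoc,
        smul_neg, neg_smul, one_smul, neg_neg, sub_neg_eq_add]
      abel
    have h3 := h2 i j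
    rw [hzero] at h3
    simpa using h3
  have hHconst : ∀ θ : ℝ, H θ = H 0 := by
    intro θ
    ext i j
    have hdiff : Differentiable ℝ (fun t => H t i j) :=
      fun t => (hHderiv t i j).differentiableAt
    have hder : ∀ t : ℝ, deriv (fun t => H t i j) t = 0 :=
      fun t => (hHderiv t i j).deriv
    exact is_const_of_deriv_eq_zero hdiff hder θ 0
  have hH0 : H 0 = (U 0).transpose := by
    have hEm0 : Em 0 = 1 := by
      simp [hEm, NormedSpace.exp_zero]
    simp [hH, hEm0, hΦ.1]
  -- conclude the formula
  constructor
  · intro θ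
    have hkey : Em θ * (U θ).transpose * Φ θ = (U 0).transpose := by
      have h := hHconst θ; rw [hH0] at h; exact h
    have hUU : U θ * (U θ).transpose = 1 := mul_eq_one_comm.mp (hVSO3 (p θ)).1
    have hEEm : E θ * Em θ = 1 := expEm (ν * θ)
    have hmain : Φ θ = U θ * E θ * (U 0).transpose := by
      calc Φ θ = U θ * (E θ * (Em θ * ((U θ).transpose * Φ θ))) := by
            rw [← Matrix.mul_assoc (E θ), hEEm, Matrix.one_mul, ← Matrix.mul_assoc, hUU,
              Matrix.one_mul]
        _ = U θ * (E θ * (Em θ * (U θ).transpose * Φ θ)) := by rw [Matrix.mul_assoc (Em θ)]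
        _ = U θ * (E θ * (U 0).transpose) := by rw [hkey]
        _ = U θ * E θ * (U 0).transpose := by rw [Matrix.mul_assoc]
    exact hmain
  -- quasiperiodicity
  · intro i j
    refine ⟨fun z => 𝒱 (z 0, fun l => φ₀ l + z l.succ) i j, ?_, ?_, ?_⟩
    · exact (hVs i j).continuous.comp ((continuous_apply (0 : Fin (d+1))).prodMk
        (continuous_pi fun l => continuous_const.add (continuous_apply l.succ)))
    · intro z k
      induction k using Fin.cases with
      | zero =>
        have harg : (fun l : Fin d => φ₀ l + Function.update z 0 (z 0 + 2 * Real.pi) l.succ)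
            = fun l => φ₀ l + z l.succ := by
          funext l
          rw [Function.update_of_ne (Fin.succ_ne_zero l)]
        beta_reduce
        rw [Function.update_self, harg]
        exact congrFun (congrFun (hVper.1 (z 0, fun l => φ₀ l + z l.succ)) i) j
      | succ m =>
        have h0 : Function.update z m.succ (z m.succ + 2 * Real.pi) 0 = z 0 :=
          Function.update_of_ne (Fin.succ_ne_zero m).symm _ _
        have harg : (fun l : Fin d =>
              φ₀ l + Function.update z m.succ (z m.succ + 2 * Real.pi) l.succ)
            = Function.update (fun l => φ₀ l + z l.succ) m
              ((fun l => φ₀ l + z l.succ) m + 2 * Real.pi) := by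
          funext l
          rcases eq_or_ne l m with rfl | hl
          · rw [Function.update_self, Function.update_self]; ring
          · rw [Function.update_of_ne (fun h => hl (Fin.succ_injective d h)),
              Function.update_of_ne hl]
        beta_reduce
        rw [h0, harg]
        exact congrFun (congrFun (hVper.2 (z 0, fun l => φ₀ l + z l.succ) m) i) j
    · intro θ
      simp [oneOmega]
end
end

section
/- Let d ≥ 1, ω ∈ ℝ^d, let q : ℝ × ℝ^d → SO(3) be of class C², 2π-periodic in θ and in each component of φ, with q(0,φ) = I for all φ, and let b be a constant real skew-symmetric 3×3 matrix. Define 𝒜 := (𝒟q + qb)qᵀ. Then a uniform invariant frame field exists for 𝒜: there are a C¹ map 𝒱 : ℝ × ℝ^d → SO(3), 2π-periodic in θ and in each component of φ, and a constant ν ∈ [0,1) with 𝒟𝒱 = 𝒜𝒱 − ν𝒱𝒥. -/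
open MeasureTheory Filter
noncomputable section

def rotZ (x : ℝ) : Matrix (Fin 3) (Fin 3) ℝ :=
  Matrix.of ![![Real.cos x, -Real.sin x, 0], ![Real.sin x, Real.cos x, 0], ![0, 0, 1]]

lemma rotZ_orth (x : ℝ) : (rotZ x).transpose * rotZ x = 1 := by
  ext i j
  fin_cases i <;> fin_cases j <;>
    simp [rotZ, Matrix.mul_apply, Matrix.transpose_apply, Fin.sum_univ_three, Matrix.one_apply,
      Matrix.vecHead, Matrix.vecTail] <;>
    nlinarith [Real.sin_sq_add_cos_sq x]

lemma rotZ_det (x : ℝ) : (rotZ x).det = 1 := by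
  simp [rotZ, Matrix.det_fin_three, Matrix.vecHead, Matrix.vecTail]
  nlinarith [Real.sin_sq_add_cos_sq x]

lemma rotZ_J_comm (x : ℝ) : Jmat * rotZ x = rotZ x * Jmat := by
  ext i j
  fin_cases i <;> fin_cases j <;>
    simp [rotZ, Jmat, Matrix.mul_apply, Fin.sum_univ_three, Matrix.vecHead, Matrix.vecTail]

lemma rotZ_per (x : ℝ) (n : ℤ) : rotZ (x + n * (2 * Real.pi)) = rotZ x := by
  simp [rotZ, Real.cos_add_int_mul_two_pi, Real.sin_add_int_mul_two_pi]

lemma rotZ_hasDeriv (k x : ℝ) (m j : Fin 3) :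
    HasDerivAt (fun t => rotZ (k * t) m j) ((k • (rotZ (k * x) * Jmat)) m j) x := by
  have hc : HasDerivAt (fun t : ℝ => k * t) k x := by
    simpa using (hasDerivAt_id x).const_mul k
  fin_cases m <;> fin_cases j <;>
    simp [rotZ, Jmat, Matrix.mul_apply, Fin.sum_univ_three, Matrix.smul_apply,
      Matrix.vecHead, Matrix.vecTail]
  · simpa [mul_comm, Function.comp_def] using ((Real.hasDerivAt_cos (k*x)).comp x hc)
  · simpa [mul_comm, Function.comp_def] using (((Real.hasDerivAt_sin (k*x)).comp x hc).fun_neg)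
  · simpa using hasDerivAt_const x (0:ℝ)
  · simpa [mul_comm, Function.comp_def] using ((Real.hasDerivAt_sin (k*x)).comp x hc)
  · simpa [mul_comm, Function.comp_def] using ((Real.hasDerivAt_cos (k*x)).comp x hc)
  · simpa using hasDerivAt_const x (0:ℝ)
  · simpa using hasDerivAt_const x (0:ℝ)
  · simpa using hasDerivAt_const x (0:ℝ)
  · simpa using hasDerivAt_const x (1:ℝ)



set_option maxHeartbeats 2000000 in
lemma skew_normal_form_aux (a v c : ℝ) (hz : ¬(a = 0 ∧ v = 0)) :
    ∃ (C : Matrix (Fin 3) (Fin 3) ℝ) (β : ℝ),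
      C.transpose * C = 1 ∧ C.det = 1 ∧
      (Matrix.of ![![0, -c, v], ![c, 0, -a], ![-v, a, 0]]) * C = β • (C * Jmat) := by
  have hs2pos : 0 < a ^ 2 + v ^ 2 := by
    rcases not_and_or.mp hz with h | h <;> positivity
  set s : ℝ := Real.sqrt (a ^ 2 + v ^ 2) with hsdef
  set β : ℝ := Real.sqrt (a ^ 2 + v ^ 2 + c ^ 2) with hβdef
  have hs : 0 < s := Real.sqrt_pos.mpr hs2pos
  have hβ : 0 < β := Real.sqrt_pos.mpr (by positivity)
  have hs2 : s ^ 2 = a ^ 2 + v ^ 2 := Real.sq_sqrt hs2pos.le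
  have hβ2 : β ^ 2 = a ^ 2 + v ^ 2 + c ^ 2 := Real.sq_sqrt (by positivity)
  have hsne : s ≠ 0 := hs.ne'
  have hβne : β ≠ 0 := hβ.ne'
  clear_value s β
  clear hsdef hβdef hz hs2pos hs hβ
  have H : ∀ t : ℝ, t * s ^ 2 = t * (a ^ 2 + v ^ 2) := fun t => by rw [hs2]
  have Hβ : ∀ t : ℝ, t * β ^ 2 = t * (a ^ 2 + v ^ 2 + c ^ 2) := fun t => by rw [hβ2]
  refine ⟨Matrix.of ![![-v / s, -(a * c) / (β * s), a / β],
      ![a / s, -(v * c) / (β * s), v / β], ![0, s / β, c / β]], β, ?_, ?_, ?_⟩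
  · ext i j
    fin_cases i <;> fin_cases j <;>
      simp only [Matrix.mul_apply, Matrix.transpose_apply, Fin.sum_univ_three, Matrix.one_apply,
        Matrix.of_apply, Matrix.cons_val', Matrix.cons_val_zero, Matrix.cons_val_one,
        Matrix.head_cons, Matrix.cons_val_two, Matrix.tail_cons, Matrix.empty_val',
        Matrix.cons_val_fin_one, Matrix.head_fin_const, Fin.isValue, Fin.ext_iff] <;>
      norm_num <;> field_simp <;>
      linarith [H 1, H (c^2), H (β^2), H (s^2), H (β^2*s^2), H (c^2*β^2), H a, H v, H c,
        H (a*c), H (v*c), H (β^2*c), Hβ 1, Hβ (s^2), Hβ (β^2), Hβ (c^2), Hβ (s^2*β^2), Hβ a,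
        Hβ v, Hβ c, Hβ (a*c), Hβ (v*c), Hβ (s^2*c), H (s^2*c), H (a*c^2), H (v*c^2),
        Hβ (a*s^2), Hβ (v*s^2), H (a*β^2), H (v*β^2), H (a*β*s), H (v*β*s), H (c*β*s), Hβ (a*β*s), Hβ (v*β*s), Hβ (c*β*s), H (c*β^2*s), Hβ (c*β^2*s), H (c*β^4*s)]
  · rw [Matrix.det_fin_three]
    simp only [Matrix.of_apply, Matrix.cons_val', Matrix.cons_val_zero, Matrix.cons_val_one,
      Matrix.head_cons, Matrix.cons_val_two, Matrix.tail_cons, Matrix.empty_val',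
      Matrix.cons_val_fin_one, Matrix.head_fin_const]
    field_simp
    linear_combination (-c^2) * hs2 - s^2 * hβ2
  · ext i j
    fin_cases i <;> fin_cases j <;>
      simp only [Jmat, Matrix.mul_apply, Fin.sum_univ_three, Matrix.smul_apply,
        Matrix.of_apply, Matrix.cons_val', Matrix.cons_val_zero, Matrix.cons_val_one,
        Matrix.head_cons, Matrix.cons_val_two, Matrix.tail_cons, Matrix.empty_val',
        Matrix.cons_val_fin_one, Matrix.head_fin_const, smul_eq_mul, Fin.isValue, Fin.ext_iff] <;>
      norm_num <;> field_simp <;>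
      linarith [H 1, H (c^2), H (β^2), H (s^2), H (β^2*s^2), H (c^2*β^2), H a, H v, H c,
        H (a*c), H (v*c), H (β^2*c), Hβ 1, Hβ (s^2), Hβ (β^2), Hβ (c^2), Hβ (s^2*β^2), Hβ a,
        Hβ v, Hβ c, Hβ (a*c), Hβ (v*c), Hβ (s^2*c), H (s^2*c), H (a*c^2), H (v*c^2),
        Hβ (a*s^2), Hβ (v*s^2), H (a*β^2), H (v*β^2), H (a*β*s), H (v*β*s), H (c*β*s), Hβ (a*β*s), Hβ (v*β*s), Hβ (c*β*s), H (c*β^2*s), Hβ (c*β^2*s), H (c*β^4*s)]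


set_option maxHeartbeats 1000000 in
lemma skew_normal_form (b : Matrix (Fin 3) (Fin 3) ℝ) (hb : b.transpose = -b) :
    ∃ (C : Matrix (Fin 3) (Fin 3) ℝ) (β : ℝ),
      C.transpose * C = 1 ∧ C.det = 1 ∧ b * C = β • (C * Jmat) := by
  have hba : ∀ i j, b j i = -b i j := by
    intro i j
    have := congrFun (congrFun hb i) j
    simpa [Matrix.transpose_apply] using this
  have hbeq : b = Matrix.of ![![0, -(b 1 0), b 0 2], ![b 1 0, 0, -(b 2 1)],
      ![-(b 0 2), b 2 1, 0]] := by
    ext i j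
    fin_cases i <;> fin_cases j <;> simp [Matrix.vecHead, Matrix.vecTail] <;>
      linarith [hba 0 0, hba 1 1, hba 2 2, hba 0 1, hba 0 2, hba 1 2]
  by_cases hz : b 2 1 = 0 ∧ b 0 2 = 0
  · refine ⟨1, b 1 0, by simp, by simp, ?_⟩
    rw [hbeq, hz.1, hz.2]
    ext i j
    fin_cases i <;> fin_cases j <;>
      simp [Jmat, Matrix.mul_apply, Fin.sum_univ_three, Matrix.vecHead, Matrix.vecTail,
        Matrix.one_apply]
  · obtain ⟨C, β, h1, h2, h3⟩ := skew_normal_form_aux (b 2 1) (b 0 2) (b 1 0) hz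
    exact ⟨C, β, h1, h2, by rw [hbeq]; exact h3⟩

/-- Theorem 6.7. -/
theorem uniform_IFF_exists_for_conjugated_generator {d : ℕ} (hd : 1 ≤ d) (ω : Fin d → ℝ)
    (q : Pt d → Matrix (Fin 3) (Fin 3) ℝ)
    (hqs : SmoothMat 2 q) (hqper : PeriodicPt q) (hqSO3 : ∀ p, q p ∈ SO3)
    (hq0 : ∀ φ : Fin d → ℝ, q (0, φ) = 1)
    (b : Matrix (Fin 3) (Fin 3) ℝ) (hb : b.transpose = -b) :
    ∃ (𝒱 : Pt d → Matrix (Fin 3) (Fin 3) ℝ) (ν : ℝ),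
      IsUniformIFF ω (fun p => (Dmat ω q p + q p * b) * (q p).transpose) 𝒱 ν := by
  obtain ⟨C, β, hC1, hCdet, hbC⟩ := skew_normal_form b hb
  set k : ℤ := ⌊β⌋ with hk
  set ν : ℝ := Int.fract β with hν
  have hβν : β - ν = (k : ℝ) := by rw [hν, Int.fract]; ring
  set g : ℝ → Matrix (Fin 3) (Fin 3) ℝ := fun x => C * rotZ ((k : ℝ) * x) with hg
  set M : Pt d → Matrix (Fin 3) (Fin 3) ℝ := fun p => g p.1 with hM
  have hgd : ∀ (l j : Fin 3) (x : ℝ),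
      HasDerivAt (fun t => g t l j) (((k : ℝ) • (g x * Jmat)) l j) x := by
    intro l j x
    have h1 : (fun t => g t l j) = fun t => ∑ m, C l m * rotZ ((k : ℝ) * t) m j := by
      funext t; simp [hg, Matrix.mul_apply]
    rw [h1]
    have h2 := HasDerivAt.fun_sum (u := Finset.univ)
      (fun m _ => ((rotZ_hasDeriv (k : ℝ) x m j).const_mul (C l m)))
    refine h2.congr_deriv ?_
    simp [hg, Matrix.mul_apply, Matrix.smul_apply, Finset.mul_sum, mul_assoc, mul_left_comm]
  have hgc : ∀ (l j : Fin 3), ContDiff ℝ 1 fun x : ℝ => g x l j := by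
    intro l j
    have h1 : (fun x : ℝ => g x l j) = fun x => ∑ m, C l m * rotZ ((k : ℝ) * x) m j := by
      funext x; simp [hg, Matrix.mul_apply]
    rw [h1]
    have hkx : ContDiff ℝ 1 fun x : ℝ => (k : ℝ) * x := contDiff_const.mul contDiff_id
    refine ContDiff.sum fun m _ => contDiff_const.mul ?_
    fin_cases m <;> fin_cases j <;>
      simp [rotZ, Matrix.vecHead, Matrix.vecTail] <;>
      first
        | exact contDiff_const
        | exact Real.contDiff_cos.comp hkx
        | exact (Real.contDiff_sin.comp hkx).neg
        | exact Real.contDiff_sin.comp hkx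
  refine ⟨fun p => q p * M p, ν, ?_, ?_, ?_, ⟨Int.fract_nonneg β, Int.fract_lt_one β⟩, ?_⟩
  · intro i j
    have h1 : (fun p : Pt d => (q p * M p) i j) = fun p => ∑ l, q p i l * M p l j := by
      funext p; simp [Matrix.mul_apply]
    rw [h1]
    exact ContDiff.sum fun l _ =>
      ((hqs i l).of_le one_le_two).mul ((hgc l j).comp contDiff_fst)
  · constructor
    · intro p
      have h2 : M (p.1 + 2 * Real.pi, p.2) = M p := by
        simp only [hM, hg]
        congr 1
        have : (k : ℝ) * (p.1 + 2 * Real.pi) = (k : ℝ) * p.1 + k * (2 * Real.pi) := by ring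
        rw [this, rotZ_per]
      show q (p.1 + 2 * Real.pi, p.2) * M (p.1 + 2 * Real.pi, p.2) = q p * M p
      rw [hqper.1 p, h2]
    · intro p i
      show q (p.1, Function.update p.2 i (p.2 i + 2 * Real.pi)) *
          M (p.1, Function.update p.2 i (p.2 i + 2 * Real.pi)) = q p * M p
      rw [hqper.2 p i]
  · intro p
    have hMt : (M p).transpose * M p = 1 := by
      show (C * rotZ ((k : ℝ) * p.1)).transpose * (C * rotZ ((k : ℝ) * p.1)) = 1
      rw [Matrix.transpose_mul, mul_assoc, ← mul_assoc C.transpose, hC1, one_mul, rotZ_orth]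
    constructor
    · rw [Matrix.transpose_mul, mul_assoc, ← mul_assoc (q p).transpose, (hqSO3 p).1, one_mul,
        hMt]
    · rw [Matrix.det_mul, (hqSO3 p).2, one_mul]
      show (C * rotZ ((k : ℝ) * p.1)).det = 1
      rw [Matrix.det_mul, hCdet, rotZ_det, one_mul]
  · intro p
    have key : ∀ i j : Fin 3,
        fderiv ℝ (fun p' : Pt d => (q p' * M p') i j) p (1, ω)
          = (Dmat ω q p * M p + q p * ((k : ℝ) • (M p * Jmat))) i j := by
      intro i j
      have hq' : ∀ l : Fin 3, HasFDerivAt (fun p' : Pt d => q p' i l)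
          (fderiv ℝ (fun p' => q p' i l) p) p :=
        fun l => (((hqs i l).differentiable (by norm_num)) p).hasFDerivAt
      have hM' : ∀ l : Fin 3, HasFDerivAt (fun p' : Pt d => M p' l j)
          ((((k : ℝ) • (M p * Jmat)) l j) • (ContinuousLinearMap.fst ℝ ℝ (Fin d → ℝ))) p :=
        fun l => (hgd l j p.1).comp_hasFDerivAt p hasFDerivAt_fst
      have hsum : HasFDerivAt (fun p' : Pt d => ∑ l, q p' i l * M p' l j)
          (∑ l, (q p i l • ((((k : ℝ) • (M p * Jmat)) l j) •
              (ContinuousLinearMap.fst ℝ ℝ (Fin d → ℝ)))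
            + M p l j • fderiv ℝ (fun p' => q p' i l) p)) p :=
        HasFDerivAt.fun_sum fun l _ => (hq' l).mul (hM' l)
      have h1 : (fun p' : Pt d => (q p' * M p') i j) = fun p' => ∑ l, q p' i l * M p' l j := by
        funext p'; simp [Matrix.mul_apply]
      rw [h1, hsum.fderiv]
      simp only [ContinuousLinearMap.coe_sum', Finset.sum_apply, ContinuousLinearMap.add_apply,
        ContinuousLinearMap.smul_apply, ContinuousLinearMap.coe_fst', smul_eq_mul,
        Matrix.add_apply, Matrix.mul_apply, Dmat, Matrix.of_apply]
      rw [Finset.sum_add_distrib, add_comm]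
      congr 1
      · apply Finset.sum_congr rfl; intro l _; ring
      · apply Finset.sum_congr rfl; intro l _; ring
    have hD : Dmat ω (fun p' => q p' * M p') p
        = Dmat ω q p * M p + q p * ((k : ℝ) • (M p * Jmat)) := by
      ext i j
      exact key i j
    rw [hD]
    have hbM : b * M p = β • (M p * Jmat) := by
      show b * (C * rotZ ((k : ℝ) * p.1)) = β • (C * rotZ ((k : ℝ) * p.1) * Jmat)
      rw [← mul_assoc, hbC, Matrix.smul_mul, mul_assoc, rotZ_J_comm, ← mul_assoc]
    have hA : ((Dmat ω q p + q p * b) * (q p).transpose) * (q p * M p)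
        = Dmat ω q p * M p + q p * (β • (M p * Jmat)) := by
      rw [mul_assoc, ← mul_assoc (q p).transpose, (hqSO3 p).1, one_mul, add_mul, mul_assoc,
        hbM]
    rw [hA]
    have hsmul : q p * ((k : ℝ) • (M p * Jmat)) = (k : ℝ) • (q p * (M p * Jmat)) := by
      rw [Matrix.mul_smul]
    have hsmul2 : q p * M p * Jmat = q p * (M p * Jmat) := by rw [mul_assoc]
    rw [hsmul, hsmul2, Matrix.mul_smul, ← hβν, sub_smul]
    abel
end
end

section
/- Fix real numbers σ₁, σ₂, ω and J ≥ 0, and let 𝒜 : ℝ × ℝ → ℝ^{3×3} be the single resonance model matrix: the skew-symmetric matrix with entries 𝒜₁₂(θ,φ) = −σ₁, 𝒜₁₃(θ,φ) = σ₂√(2J) sin φ, 𝒜₂₃(θ,φ) = −σ₂√(2J) cos φ (and 𝒜₂₁ = −𝒜₁₂, 𝒜₃₁ = −𝒜₁₃, 𝒜₃₂ = −𝒜₂₃, zero diagonal). Then a uniform invariant frame field exists: there are a C¹ map 𝒱 : ℝ × ℝ → SO(3), 2π-periodic in θ and in φ, and a constant ν ∈ [0,1) with 𝒟𝒱 = 𝒜𝒱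 − ν𝒱𝒥, where 𝒟 = ∂_θ + ω∂_φ; moreover ν can be taken to be the fractional part of σ := √((σ₁−ω)² + 2σ₂²J). -/
open MeasureTheory Filter
noncomputable section

def Rrot (t : ℝ) : Matrix (Fin 3) (Fin 3) ℝ :=
  Matrix.of ![![Real.cos t, -Real.sin t, 0], ![Real.sin t, Real.cos t, 0], ![0, 0, 1]]
def Pmat (pc ps : ℝ) : Matrix (Fin 3) (Fin 3) ℝ :=
  Matrix.of ![![pc, 0, ps], ![0, 1, 0], ![-ps, 0, pc]]
def A0 (σ₁ b : ℝ) : Matrix (Fin 3) (Fin 3) ℝ :=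
  Matrix.of ![![0, -σ₁, 0], ![σ₁, 0, -b], ![0, b, 0]]

lemma SO3_mul' {A B : Matrix (Fin 3) (Fin 3) ℝ} (hA : A ∈ SO3) (hB : B ∈ SO3) : A * B ∈ SO3 := by
  obtain ⟨hA1, hA2⟩ := hA; obtain ⟨hB1, hB2⟩ := hB
  constructor
  · rw [Matrix.transpose_mul, Matrix.mul_assoc, ← Matrix.mul_assoc A.transpose, hA1,
      Matrix.one_mul, hB1]
  · rw [Matrix.det_mul, hA2, hB2, one_mul]

lemma Rrot_SO3 (t : ℝ) : Rrot t ∈ SO3 := by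
  constructor
  · ext i j
    fin_cases i <;> fin_cases j <;>
      simp [Rrot, Matrix.mul_apply, Matrix.transpose_apply, Fin.sum_univ_three,
        Matrix.one_apply, Matrix.vecHead, Matrix.vecTail] <;>
      nlinarith [Real.sin_sq_add_cos_sq t]
  · rw [Matrix.det_fin_three]
    simp [Rrot, Matrix.vecHead, Matrix.vecTail]
    nlinarith [Real.sin_sq_add_cos_sq t]

lemma Pmat_SO3 {pc ps : ℝ} (h1 : pc ^ 2 + ps ^ 2 = 1) : Pmat pc ps ∈ SO3 := by
  constructor
  · ext i j
    fin_cases i <;> fin_cases j <;>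
      simp [Pmat, Matrix.mul_apply, Matrix.transpose_apply, Fin.sum_univ_three,
        Matrix.one_apply, Matrix.vecHead, Matrix.vecTail] <;>
      first | linear_combination h1 | linear_combination -h1 | ring
  · rw [Matrix.det_fin_three]
    simp [Pmat, Matrix.vecHead, Matrix.vecTail]
    first | linear_combination h1 | linear_combination -h1 | ring

lemma Rrot_deriv (t : ℝ) (i j : Fin 3) :
    HasDerivAt (fun s => Rrot s i j) ((Jmat * Rrot t) i j) t := by
  fin_cases i <;> fin_cases j <;>
    simp [Rrot, Jmat, Matrix.mul_apply, Fin.sum_univ_three, Matrix.vecHead, Matrix.vecTail] <;>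
    first
      | exact Real.hasDerivAt_cos t
      | exact Real.hasDerivAt_sin t
      | exact (Real.hasDerivAt_sin t).neg
      | simpa using (Real.hasDerivAt_cos t).neg
      | exact hasDerivAt_const (F := ℝ) t _

lemma Jmat_comm_Rrot (t : ℝ) : Jmat * Rrot t = Rrot t * Jmat := by
  ext i j
  fin_cases i <;> fin_cases j <;>
    simp [Rrot, Jmat, Matrix.mul_apply, Fin.sum_univ_three, Matrix.vecHead, Matrix.vecTail] <;>
    ring

lemma Rrot_add_int (t : ℝ) (m : ℤ) : Rrot (t + m * (2 * Real.pi)) = Rrot t := by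
  ext i j
  fin_cases i <;> fin_cases j <;>
    simp [Rrot, Real.cos_add_int_mul_two_pi, Real.sin_add_int_mul_two_pi]

lemma contDiff_Rrot_entry {f : Pt 1 → ℝ} (hf : ContDiff ℝ 1 f) (i j : Fin 3) :
    ContDiff ℝ 1 fun p => Rrot (f p) i j := by
  fin_cases i <;> fin_cases j <;>
    simp [Rrot, Matrix.vecHead, Matrix.vecTail] <;>
    first
      | exact (Real.contDiff_cos.of_le le_top).comp hf
      | exact (Real.contDiff_sin.of_le le_top).comp hf
      | exact ((Real.contDiff_sin.of_le le_top).comp hf).neg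
      | exact contDiff_const

lemma coreK (ω σ₁ b c σ pc ps : ℝ) (hc : c = σ₁ - ω)
    (h2 : σ * pc = c) (h3 : σ * ps = b) (h4 : c * pc + b * ps = σ) (h5 : b * pc = c * ps) :
    ω • (Jmat * Pmat pc ps) + σ • (Pmat pc ps * Jmat) = A0 σ₁ b * Pmat pc ps := by
  ext i j
  fin_cases i <;> fin_cases j <;>
    simp [Pmat, A0, Jmat, Matrix.mul_apply, Fin.sum_univ_three, Matrix.vecHead,
      Matrix.vecTail] <;>
    first
      | linarith
      | linear_combination -h4 + pc * hc
      | linear_combination h5 + ps * hc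

lemma comm2 (σ₁ b φ : ℝ) :
    Matrix.of ![![0, -σ₁, b * Real.sin φ], ![σ₁, 0, -(b * Real.cos φ)],
      ![-(b * Real.sin φ), b * Real.cos φ, 0]] * Rrot φ = Rrot φ * A0 σ₁ b := by
  ext i j
  fin_cases i <;> fin_cases j <;>
    simp [A0, Rrot, Matrix.mul_apply, Fin.sum_univ_three, Matrix.vecHead, Matrix.vecTail] <;>
    (try ring) <;> linear_combination b * (Real.sin_sq_add_cos_sq φ)

/-- Proposition 7.1, the single resonance model is well-tuned. -/
theorem single_resonance_model_uniform_IFF (σ₁ σ₂ ω J : ℝ) (hJ : 0 ≤ J) :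
    ∃ 𝒱 : Pt 1 → Matrix (Fin 3) (Fin 3) ℝ,
      IsUniformIFF (fun _ : Fin 1 => ω)
        (fun p => Matrix.of
          ![![0, -σ₁, σ₂ * Real.sqrt (2 * J) * Real.sin (p.2 0)],
            ![σ₁, 0, -(σ₂ * Real.sqrt (2 * J) * Real.cos (p.2 0))],
            ![-(σ₂ * Real.sqrt (2 * J) * Real.sin (p.2 0)),
              σ₂ * Real.sqrt (2 * J) * Real.cos (p.2 0), 0]])
        𝒱 (Int.fract (Real.sqrt ((σ₁ - ω) ^ 2 + 2 * σ₂ ^ 2 * J))) := by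
  have hσ0 : (0:ℝ) ≤ Real.sqrt ((σ₁ - ω) ^ 2 + 2 * σ₂ ^ 2 * J) := Real.sqrt_nonneg _
  set b := σ₂ * Real.sqrt (2 * J) with hb
  set c := σ₁ - ω with hc
  set σ := Real.sqrt ((σ₁ - ω) ^ 2 + 2 * σ₂ ^ 2 * J) with hσ
  have hσ2 : σ ^ 2 = c ^ 2 + b ^ 2 := by
    rw [hσ, Real.sq_sqrt (by nlinarith [sq_nonneg σ₂, sq_nonneg (σ₁ - ω)])]
    rw [hb, hc, mul_pow, Real.sq_sqrt (by linarith)]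
    ring
  obtain ⟨pc, ps, h1, h2, h3, h4, h5⟩ :
      ∃ pc ps : ℝ, pc ^ 2 + ps ^ 2 = 1 ∧ σ * pc = c ∧ σ * ps = b ∧
        c * pc + b * ps = σ ∧ b * pc = c * ps := by
    rcases eq_or_lt_of_le hσ0 with h | h
    · have hc0 : c = 0 := by nlinarith
      have hb0 : b = 0 := by nlinarith
      exact ⟨1, 0, by norm_num, by rw [← h, hc0]; ring, by rw [← h, hb0]; ring,
        by rw [← h, hc0, hb0]; ring, by rw [hc0, hb0]; ring⟩
    · refine ⟨c / σ, b / σ, ?_, ?_, ?_, ?_, ?_⟩ <;> field_simp <;> nlinarith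
  set n : ℤ := ⌊σ⌋ with hn
  have hnν : (n : ℝ) + Int.fract σ = σ := Int.floor_add_fract σ
  refine ⟨fun p => Rrot (p.2 0) * Pmat pc ps * Rrot ((n : ℝ) * p.1), ?_, ⟨?_, ?_⟩, ?_,
    ⟨Int.fract_nonneg _, Int.fract_lt_one _⟩, ?_⟩
  · -- SmoothMat
    intro i j
    have hrw : (fun p : Pt 1 => (Rrot (p.2 0) * Pmat pc ps * Rrot ((n : ℝ) * p.1)) i j)
        = fun p : Pt 1 =>
        ∑ l, (∑ k, Rrot (p.2 0) i k * Pmat pc ps k l) * Rrot ((n : ℝ) * p.1) l j := by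
      funext q
      simp [Matrix.mul_apply]
    rw [hrw]
    apply ContDiff.sum; intro l _
    apply ContDiff.mul
    · apply ContDiff.sum; intro k _
      exact (contDiff_Rrot_entry (by fun_prop) i k).mul contDiff_const
    · exact contDiff_Rrot_entry (by fun_prop) l j
  · -- periodic in θ
    intro p
    have : (n : ℝ) * (p.1 + 2 * Real.pi) = (n : ℝ) * p.1 + (n : ℝ) * (2 * Real.pi) := by ring
    simp only [this, Rrot_add_int]
  · -- periodic in φ
    intro p i
    have hi : i = 0 := Subsingleton.elim i 0
    subst hi
    simp only [Function.update_self]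
    have : p.2 0 + 2 * Real.pi = p.2 0 + ((1 : ℤ) : ℝ) * (2 * Real.pi) := by push_cast; ring
    rw [this, Rrot_add_int]
  · -- SO3
    intro p
    exact SO3_mul' (SO3_mul' (Rrot_SO3 _) (Pmat_SO3 h1)) (Rrot_SO3 _)
  · -- PDE
    intro p
    have hu : HasFDerivAt (fun q : Pt 1 => q.1)
        (ContinuousLinearMap.fst ℝ ℝ (Fin 1 → ℝ)) p := hasFDerivAt_fst
    have hv : HasFDerivAt (fun q : Pt 1 => q.2 0)
        ((ContinuousLinearMap.proj (0 : Fin 1)).comp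
          (ContinuousLinearMap.snd ℝ ℝ (Fin 1 → ℝ))) p :=
      ((ContinuousLinearMap.proj (0 : Fin 1)).comp
          (ContinuousLinearMap.snd ℝ ℝ (Fin 1 → ℝ))).hasFDerivAt
    have hg : HasFDerivAt (fun q : Pt 1 => (n : ℝ) * q.1)
        ((n : ℝ) • ContinuousLinearMap.fst ℝ ℝ (Fin 1 → ℝ)) p := hu.const_mul _
    have hRφ : ∀ i k : Fin 3, HasFDerivAt (fun q : Pt 1 => Rrot (q.2 0) i k)
        (((Jmat * Rrot (p.2 0)) i k) • ((ContinuousLinearMap.proj (0 : Fin 1)).comp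
          (ContinuousLinearMap.snd ℝ ℝ (Fin 1 → ℝ)))) p :=
      fun i k => (Rrot_deriv (p.2 0) i k).comp_hasFDerivAt (h₂ := fun s => Rrot s i k) p hv
    have hRθ : ∀ l j : Fin 3, HasFDerivAt (fun q : Pt 1 => Rrot ((n : ℝ) * q.1) l j)
        (((Jmat * Rrot ((n : ℝ) * p.1)) l j) •
          ((n : ℝ) • ContinuousLinearMap.fst ℝ ℝ (Fin 1 → ℝ))) p :=
      fun l j => (Rrot_deriv ((n : ℝ) * p.1) l j).comp_hasFDerivAt (h₂ := fun s => Rrot s l j) p hg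
    have key : ∀ i j : Fin 3,
        fderiv ℝ (fun q : Pt 1 => (Rrot (q.2 0) * Pmat pc ps * Rrot ((n : ℝ) * q.1)) i j) p
            (1, fun _ => ω)
          = ω * ((Jmat * Rrot (p.2 0) * Pmat pc ps * Rrot ((n : ℝ) * p.1)) i j)
            + (n : ℝ) * ((Rrot (p.2 0) * Pmat pc ps * (Jmat * Rrot ((n : ℝ) * p.1))) i j) := by
      intro i j
      have H := HasFDerivAt.fun_sum (u := (Finset.univ : Finset (Fin 3)))
        (fun l _ => ((HasFDerivAt.fun_sum
          (u := (Finset.univ : Finset (Fin 3)))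
          (fun k _ => (hRφ i k).mul_const (Pmat pc ps k l))).mul (hRθ l j)))
      have hrw : (fun q : Pt 1 => (Rrot (q.2 0) * Pmat pc ps * Rrot ((n : ℝ) * q.1)) i j)
          = fun q : Pt 1 => ∑ l, (∑ k, Rrot (q.2 0) i k * Pmat pc ps k l)
            * Rrot ((n : ℝ) * q.1) l j := by
        funext q
        simp [Matrix.mul_apply]
      simp only [Pi.mul_apply] at H
      rw [hrw, H.fderiv]
      simp only [ContinuousLinearMap.coe_sum', Finset.sum_apply,
        ContinuousLinearMap.add_apply, ContinuousLinearMap.smul_apply,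
        ContinuousLinearMap.coe_comp', Function.comp_apply,
        ContinuousLinearMap.coe_fst', ContinuousLinearMap.proj_apply,
        ContinuousLinearMap.coe_snd', smul_eq_mul]
      simp only [Matrix.mul_apply, Fin.sum_univ_three]
      ring
    have M : ω • (Jmat * Rrot (p.2 0) * Pmat pc ps * Rrot ((n : ℝ) * p.1))
        + σ • (Rrot (p.2 0) * Pmat pc ps * (Jmat * Rrot ((n : ℝ) * p.1)))
        = Matrix.of ![![0, -σ₁, b * Real.sin (p.2 0)], ![σ₁, 0, -(b * Real.cos (p.2 0))],
            ![-(b * Real.sin (p.2 0)), b * Real.cos (p.2 0), 0]]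
          * (Rrot (p.2 0) * Pmat pc ps * Rrot ((n : ℝ) * p.1)) := by
      have e := coreK ω σ₁ b c σ pc ps hc h2 h3 h4 h5
      have step1 : Jmat * Rrot (p.2 0) * Pmat pc ps * Rrot ((n : ℝ) * p.1)
          = Rrot (p.2 0) * ((Jmat * Pmat pc ps) * Rrot ((n : ℝ) * p.1)) := by
        rw [Jmat_comm_Rrot]
        simp only [Matrix.mul_assoc]
      have step2 : Rrot (p.2 0) * Pmat pc ps * (Jmat * Rrot ((n : ℝ) * p.1))
          = Rrot (p.2 0) * ((Pmat pc ps * Jmat) * Rrot ((n : ℝ) * p.1)) := by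
        simp only [Matrix.mul_assoc]
      calc ω • (Jmat * Rrot (p.2 0) * Pmat pc ps * Rrot ((n : ℝ) * p.1))
            + σ • (Rrot (p.2 0) * Pmat pc ps * (Jmat * Rrot ((n : ℝ) * p.1)))
          = Rrot (p.2 0) * ((ω • (Jmat * Pmat pc ps) + σ • (Pmat pc ps * Jmat))
              * Rrot ((n : ℝ) * p.1)) := by
            rw [step1, step2, Matrix.add_mul, Matrix.mul_add, Matrix.smul_mul,
              Matrix.smul_mul, Matrix.mul_smul, Matrix.mul_smul]
        _ = Rrot (p.2 0) * ((A0 σ₁ b * Pmat pc ps) * Rrot ((n : ℝ) * p.1)) := by rw [e]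
        _ = (Rrot (p.2 0) * A0 σ₁ b) * (Pmat pc ps * Rrot ((n : ℝ) * p.1)) := by
            simp only [Matrix.mul_assoc]
        _ = (Matrix.of ![![0, -σ₁, b * Real.sin (p.2 0)], ![σ₁, 0, -(b * Real.cos (p.2 0))],
              ![-(b * Real.sin (p.2 0)), b * Real.cos (p.2 0), 0]] * Rrot (p.2 0))
            * (Pmat pc ps * Rrot ((n : ℝ) * p.1)) := by rw [comm2]
        _ = Matrix.of ![![0, -σ₁, b * Real.sin (p.2 0)], ![σ₁, 0, -(b * Real.cos (p.2 0))],
              ![-(b * Real.sin (p.2 0)), b * Real.cos (p.2 0), 0]]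
            * (Rrot (p.2 0) * Pmat pc ps * Rrot ((n : ℝ) * p.1)) := by
            simp only [Matrix.mul_assoc]
    have eJ : Rrot (p.2 0) * Pmat pc ps * Rrot ((n : ℝ) * p.1) * Jmat
        = Rrot (p.2 0) * Pmat pc ps * (Jmat * Rrot ((n : ℝ) * p.1)) := by
      rw [Matrix.mul_assoc, ← Jmat_comm_Rrot]
    ext i j
    simp only [Dmat, Matrix.of_apply]
    rw [key i j]
    have Mij := congrFun (congrFun M i) j
    have eJij := congrFun (congrFun eJ i) j
    simp only [Matrix.add_apply, Matrix.smul_apply, Matrix.sub_apply, smul_eq_mul] at Mij ⊢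
    rw [eJij]
    linear_combination Mij
      + ((Rrot (p.2 0) * Pmat pc ps * (Jmat * Rrot ((n : ℝ) * p.1))) i j) * hnν
end
end

section
/- In the spin-orbit setting, let 𝒱 be a uniform invariant frame field with constant precession rate ν = C_𝒱 ∈ [0,1), and suppose ν ∈ {m·(1,ω) : m ∈ ℤ^{d+1}} (i.e. 0 belongs to the equivalence class of C_𝒱). Then for every φ₀ ∈ ℝ^d, every solution S : ℝ → ℝ³ of Ṡ(θ) = 𝒜(θ, ωθ+φ₀) S(θ) is componentwise quasiperiodic with tune vector (1,ω) ∈ ℝ^{d+1}. -/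
open MeasureTheory Filter
noncomputable section

/-- Rotation by angle t about the third axis. -/
def Rot (t : ℝ) : Matrix (Fin 3) (Fin 3) ℝ :=
  Matrix.of ![![Real.cos t, -Real.sin t, 0], ![Real.sin t, Real.cos t, 0], ![0,0,1]]

lemma Rot_entry_hasDerivAt (i j : Fin 3) (t : ℝ) :
    HasDerivAt (fun s => Rot s i j) ((Jmat * Rot t) i j) t := by
  fin_cases i <;> fin_cases j <;>
    simp [Rot, Jmat, Matrix.mul_apply, Fin.sum_univ_three] <;>
    first
      | exact hasDerivAt_const _ _
      | simpa using Real.hasDerivAt_cos t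
      | simpa using Real.hasDerivAt_sin t
      | exact (Real.hasDerivAt_sin t).neg

lemma Rot_int_periodic (t : ℝ) (k : ℤ) : Rot (t + k * (2 * Real.pi)) = Rot t := by
  simp [Rot, Real.cos_add_int_mul_two_pi, Real.sin_add_int_mul_two_pi]

lemma Rot_mul_transpose (t : ℝ) : Rot t * (Rot t).transpose = 1 := by
  ext i j
  rw [Matrix.mul_apply]
  simp only [Matrix.transpose_apply]
  fin_cases i <;> fin_cases j <;>
    simp [Rot, Matrix.one_apply, Fin.sum_univ_three] <;>
    nlinarith [Real.sin_sq_add_cos_sq t]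

lemma Rot_entry_continuous (i j : Fin 3) : Continuous fun t => Rot t i j := by
  fin_cases i <;> fin_cases j <;> simp [Rot] <;> fun_prop

/-- Theorem 9.1a. -/
theorem resonant_uniform_IFF_gives_quasiperiodic_spin {d : ℕ} (hd : 1 ≤ d)
    (ω : Fin d → ℝ)
    (𝒜 : Pt d → Matrix (Fin 3) (Fin 3) ℝ)
    (h𝒜s : SmoothMat 1 𝒜) (h𝒜skew : ∀ p, (𝒜 p).transpose = -(𝒜 p))
    (h𝒜per : PeriodicPt 𝒜)
    (𝒱 : Pt d → Matrix (Fin 3) (Fin 3) ℝ) (ν : ℝ)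
    (h𝒱 : IsUniformIFF ω 𝒜 𝒱 ν)
    (hres : ∃ m : Fin (d + 1) → ℤ, ν = zdot m (oneOmega ω)) :
    ∀ (φ₀ : Fin d → ℝ) (S : ℝ → Fin 3 → ℝ),
      (∀ θ : ℝ, HasDerivAt S ((𝒜 (θ, fun l => ω l * θ + φ₀ l)).mulVec (S θ)) θ) →
      ∀ i, IsQuasiperiodic (oneOmega ω) fun θ => S θ i := by
  obtain ⟨hVs, hVper, hVSO, hnu01, hVD⟩ := h𝒱
  obtain ⟨m, hm⟩ := hres
  intro φ₀ S hS i
  have hskew' : ∀ (p : Pt d) (a b : Fin 3), 𝒜 p b a = -(𝒜 p a b) := by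
    intro p a b
    have := congrArg (fun M : Matrix (Fin 3) (Fin 3) ℝ => M a b) (h𝒜skew p)
    simpa using this
  set L : ℝ → Pt d := fun θ => (θ, fun l => ω l * θ + φ₀ l) with hLdef
  have hLd : ∀ θ : ℝ, HasDerivAt L ((1 : ℝ), ω) θ := by
    intro θ
    refine HasDerivAt.prodMk (hasDerivAt_id θ) ?_
    rw [hasDerivAt_pi]
    intro l
    simpa using ((hasDerivAt_id θ).const_mul (ω l)).add_const (φ₀ l)
  have hVentry : ∀ (θ : ℝ) (a b : Fin 3),
      HasDerivAt (fun s => 𝒱 (L s) a b)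
        ((𝒜 (L θ) * 𝒱 (L θ) - ν • (𝒱 (L θ) * Jmat)) a b) θ := by
    intro θ a b
    have h1 : HasFDerivAt (fun q => 𝒱 q a b) (fderiv ℝ (fun q => 𝒱 q a b) (L θ)) (L θ) :=
      (((hVs a b).differentiable (by simp)) (L θ)).hasFDerivAt
    have h2 := h1.comp_hasDerivAt θ (hLd θ)
    have h3 : fderiv ℝ (fun q => 𝒱 q a b) (L θ) ((1 : ℝ), ω)
        = (𝒜 (L θ) * 𝒱 (L θ) - ν • (𝒱 (L θ) * Jmat)) a b := by
      have h4 := congrArg (fun M : Matrix (Fin 3) (Fin 3) ℝ => M a b) (hVD (L θ))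
      simpa [Dmat] using h4
    rwa [h3] at h2
  set W : ℝ → Matrix (Fin 3) (Fin 3) ℝ := fun θ => 𝒱 (L θ) * Rot (ν * θ) with hWdef
  have hWd : ∀ (θ : ℝ) (a b : Fin 3),
      HasDerivAt (fun s => W s a b) ((𝒜 (L θ) * W θ) a b) θ := by
    intro θ a b
    have key : ∀ k : Fin 3,
        HasDerivAt (fun s => 𝒱 (L s) a k * Rot (ν * s) k b)
          ((𝒜 (L θ) * 𝒱 (L θ) - ν • (𝒱 (L θ) * Jmat)) a k * Rot (ν * θ) k b
            + 𝒱 (L θ) a k * (ν * (Jmat * Rot (ν * θ)) k b)) θ := by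
      intro k
      have hR : HasDerivAt (fun s => Rot (ν * s) k b) (ν * (Jmat * Rot (ν * θ)) k b) θ := by
        have h5 := (Rot_entry_hasDerivAt k b (ν * θ)).comp θ
          ((hasDerivAt_id θ).const_mul ν)
        simpa [mul_comm, Function.comp_def] using h5
      exact (hVentry θ a k).mul hR
    have hsum := HasDerivAt.sum (fun k (_ : k ∈ Finset.univ) => key k)
    have hfun : (fun s => ∑ k, 𝒱 (L s) a k * Rot (ν * s) k b) = fun s => W s a b := by
      funext s
      rw [hWdef]
      simp [Matrix.mul_apply]
    simp only [Finset.sum_fn] at hsum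
    rw [hfun] at hsum
    refine hsum.congr_deriv ?_
    simp only [hWdef, Matrix.mul_apply, Matrix.sub_apply, Matrix.smul_apply,
      Fin.sum_univ_three, smul_eq_mul]
    simp [Jmat]
    ring
  have hSi : ∀ (θ : ℝ) (j : Fin 3),
      HasDerivAt (fun t => S t j) (((𝒜 (L θ)).mulVec (S θ)) j) θ :=
    fun θ j => (hasDerivAt_pi.mp (hS θ)) j
  set c : Fin 3 → ℝ := fun k => ∑ j, W 0 j k * S 0 j with hcdef
  have hconst : ∀ (θ : ℝ) (k : Fin 3), ∑ j, W θ j k * S θ j = c k := by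
    intro θ k
    have hderiv : ∀ t : ℝ, HasDerivAt (fun s => ∑ j, W s j k * S s j) 0 t := by
      intro t
      have h := HasDerivAt.sum (fun j (_ : j ∈ Finset.univ) => (hWd t j k).mul (hSi t j))
      simp only [Finset.sum_fn] at h
      refine h.congr_deriv ?_
      have h00 : 𝒜 (L t) 0 0 = 0 := by linarith [hskew' (L t) 0 0]
      have h11 : 𝒜 (L t) 1 1 = 0 := by linarith [hskew' (L t) 1 1]
      have h22 : 𝒜 (L t) 2 2 = 0 := by linarith [hskew' (L t) 2 2]
      simp only [Matrix.mul_apply, Matrix.mulVec, dotProduct, Fin.sum_univ_three]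
      rw [h00, h11, h22, hskew' (L t) 0 1, hskew' (L t) 0 2, hskew' (L t) 1 2]
      ring
    have hdif : Differentiable ℝ (fun s => ∑ j, W s j k * S s j) :=
      fun t => (hderiv t).differentiableAt
    have hval := is_const_of_deriv_eq_zero hdif (fun t => (hderiv t).deriv) θ 0
    exact hval
  have hWorth : ∀ θ : ℝ, W θ * (W θ).transpose = 1 := by
    intro θ
    have hV1 : (𝒱 (L θ)).transpose * 𝒱 (L θ) = 1 := (hVSO (L θ)).1
    have hV2 : 𝒱 (L θ) * (𝒱 (L θ)).transpose = 1 := mul_eq_one_comm.mp hV1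
    show 𝒱 (L θ) * Rot (ν * θ) * (𝒱 (L θ) * Rot (ν * θ)).transpose = 1
    rw [Matrix.transpose_mul, Matrix.mul_assoc, ← Matrix.mul_assoc (Rot (ν * θ)),
      Rot_mul_transpose, Matrix.one_mul, hV2]
  have horth : ∀ (θ : ℝ) (a j : Fin 3),
      ∑ k, W θ a k * W θ j k = (1 : Matrix (Fin 3) (Fin 3) ℝ) a j := by
    intro θ a j
    have := congrArg (fun M : Matrix (Fin 3) (Fin 3) ℝ => M a j) (hWorth θ)
    simpa [Matrix.mul_apply, Matrix.transpose_apply] using this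
  have hSrep : ∀ (θ : ℝ) (a : Fin 3), S θ a = ∑ k, W θ a k * c k := by
    intro θ a
    have hc' : ∀ k, c k = ∑ j, W θ j k * S θ j := fun k => (hconst θ k).symm
    refine Eq.symm ?_
    calc ∑ k, W θ a k * c k
        = ∑ k, ∑ j, W θ a k * (W θ j k * S θ j) := by
          simp only [hc', Finset.mul_sum]
      _ = ∑ j, ∑ k, W θ a k * (W θ j k * S θ j) := Finset.sum_comm
      _ = ∑ j, (∑ k, W θ a k * W θ j k) * S θ j := by
          congr 1
          funext j
          rw [Finset.sum_mul]
          congr 1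
          funext k
          ring
      _ = ∑ j, (1 : Matrix (Fin 3) (Fin 3) ℝ) a j * S θ j := by
          simp only [horth θ]
      _ = S θ a := by simp [Matrix.one_apply]
  refine ⟨fun z => ∑ k, (𝒱 (z 0, fun l => z l.succ + φ₀ l) * Rot (zdot m z)) i k * c k,
    ?_, ?_, ?_⟩
  · apply continuous_finset_sum
    intro k _
    apply Continuous.mul _ continuous_const
    have hrw : (fun z : Fin (d+1) → ℝ =>
        (𝒱 (z 0, fun l => z l.succ + φ₀ l) * Rot (zdot m z)) i k)
        = fun z => ∑ j, 𝒱 (z 0, fun l => z l.succ + φ₀ l) i j * Rot (zdot m z) j k := by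
      funext z; rw [Matrix.mul_apply]
    rw [hrw]
    apply continuous_finset_sum
    intro j _
    apply Continuous.mul
    · have hc1 : Continuous fun z : Fin (d+1) → ℝ => ((z 0, fun l => z l.succ + φ₀ l) : Pt d) :=
        (continuous_apply 0).prodMk
          (continuous_pi fun l => (continuous_apply (l.succ)).add continuous_const)
      exact ((hVs i j).continuous).comp hc1
    · have hc2 : Continuous fun z : Fin (d+1) → ℝ => zdot m z :=
        continuous_finset_sum _ fun i' _ => continuous_const.mul (continuous_apply i')
      exact (Rot_entry_continuous j k).comp hc2
  · intro z jj
    have hzd : zdot m (Function.update z jj (z jj + 2 * Real.pi))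
        = zdot m z + (m jj : ℝ) * (2 * Real.pi) := by
      have hupd : ∀ i', Function.update z jj (z jj + 2 * Real.pi) i'
          = z i' + if i' = jj then 2 * Real.pi else 0 := by
        intro i'
        by_cases h : i' = jj
        · subst h; simp
        · rw [Function.update_of_ne h, if_neg h, add_zero]
      simp only [zdot, hupd, mul_add]
      rw [Finset.sum_add_distrib]
      congr 1
      simp [mul_ite, Finset.sum_ite_eq']
    have e2 : Rot (zdot m (Function.update z jj (z jj + 2 * Real.pi))) = Rot (zdot m z) := by
      rw [hzd]
      exact Rot_int_periodic _ _
    induction jj using Fin.cases with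
    | zero =>
      have hφ : (fun l : Fin d => Function.update z 0 (z 0 + 2 * Real.pi) l.succ + φ₀ l)
          = fun l => z l.succ + φ₀ l := by
        funext l
        rw [Function.update_of_ne (Fin.succ_ne_zero l)]
      have hθ : Function.update z 0 (z 0 + 2 * Real.pi) 0 = z 0 + 2 * Real.pi := by simp
      have e1 : 𝒱 (Function.update z 0 (z 0 + 2 * Real.pi) 0,
            fun l => Function.update z 0 (z 0 + 2 * Real.pi) l.succ + φ₀ l)
          = 𝒱 (z 0, fun l => z l.succ + φ₀ l) := by
        rw [hθ, hφ]
        exact hVper.1 (z 0, fun l => z l.succ + φ₀ l)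
      simp only [e1, e2]
    | succ l₀ =>
      have hθ : Function.update z l₀.succ (z l₀.succ + 2 * Real.pi) 0 = z 0 :=
        Function.update_of_ne (Fin.succ_ne_zero l₀).symm _ _
      have hφ : (fun l : Fin d => Function.update z l₀.succ (z l₀.succ + 2 * Real.pi) l.succ + φ₀ l)
          = Function.update (fun l => z l.succ + φ₀ l) l₀ ((z l₀.succ + φ₀ l₀) + 2 * Real.pi) := by
        funext l
        by_cases h : l = l₀
        · subst h
          simp [Function.update_self]
          ring
        · rw [Function.update_of_ne (fun hc => h (Fin.succ_injective d hc)),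
            Function.update_of_ne h]
      have e1 : 𝒱 (Function.update z l₀.succ (z l₀.succ + 2 * Real.pi) 0,
            fun l => Function.update z l₀.succ (z l₀.succ + 2 * Real.pi) l.succ + φ₀ l)
          = 𝒱 (z 0, fun l => z l.succ + φ₀ l) := by
        rw [hθ, hφ]
        have := hVper.2 (z 0, fun l => z l.succ + φ₀ l) l₀
        simpa using this
      simp only [e1, e2]
  · intro θ
    show S θ i = ∑ k, (𝒱 (oneOmega ω 0 * θ, fun l => oneOmega ω l.succ * θ + φ₀ l)
      * Rot (zdot m fun i' => oneOmega ω i' * θ)) i k * c k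
    have e1 : ((oneOmega ω 0 * θ, fun l => oneOmega ω l.succ * θ + φ₀ l) : Pt d) = L θ := by
      rw [hLdef]
      refine Prod.ext ?_ ?_
      · simp [oneOmega]
      · funext l
        simp [oneOmega]
    have e2 : zdot m (fun i' => oneOmega ω i' * θ) = ν * θ := by
      rw [hm]
      simp only [zdot]
      rw [Finset.sum_mul]
      congr 1
      funext i'
      ring
    rw [e1, e2]
    exact hSrep θ i
end
end
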